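/- Let Ω = (-L₁,L₁)×(-L₂,L₂)×(0,1), t ≥ 0, and define H(v) = ∫_Ω |∇v|² + 2t v·(∇×v) - (π²/4 + t²)|v|² dx over v ∈ W^{1,2}(Ω,ℝ³) vanishing at z=0 and z=1 and periodic in x and y. If t ≤ 0.766 then there exists γ_t > 0 such that H(v) ≥ γ_t ∫_Ω |v|² dx for all such v; one may take γ_t = π²(1 - 1/(2√2)) - π²/4 - (1+4√2)t². -/

import Mathlib

open Real Set MeasureTheory

/-- Partial derivative ∂ⱼ vᵢ of a vector field on ℝ³. -/
noncomputable def pder (v : (Fin 3 → ℝ) → (Fin 3 → ℝ)) (x : Fin 3 → ℝ) (i j : Fin 3) : ℝ :=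
  fderiv ℝ v x (Pi.single j 1) i

/-- The curl ∇ × v of a vector field on ℝ³. -/
noncomputable def curl (v : (Fin 3 → ℝ) → (Fin 3 → ℝ)) (x : Fin 3 → ℝ) : Fin 3 → ℝ :=
  ![pder v x 2 1 - pder v x 1 2, pder v x 0 2 - pder v x 2 0, pder v x 1 0 - pder v x 0 1]

set_option maxHeartbeats 1000000

section Aux

lemma cauchy_pair (s t v q : ℝ) (hs : 0 < s) (hs2 : s ^ 2 = 2) :
    -(s / 4 * q ^ 2) - 2 * s * t ^ 2 * v ^ 2 ≤ 2 * t * v * q := by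
  nlinarith [mul_nonneg (by positivity : (0:ℝ) ≤ s / 4) (sq_nonneg (q + 2 * s * t * v)),
    sq_nonneg (q + 2 * s * t * v), hs2]

lemma wirtinger (f : ℝ → ℝ) (hf : ContDiff ℝ 1 f) (h0 : f 0 = 0) (h1 : f 1 = 0) :
    0 ≤ ∫ z in Set.Ioo (0:ℝ) 1, ((deriv f z) ^ 2 - π ^ 2 * (f z) ^ 2) := by
  have hfc : Continuous f := hf.continuous
  have hfd : Continuous (deriv f) := hf.continuous_deriv le_rfl
  have hdiff : ∀ x : ℝ, DifferentiableAt ℝ f x := fun x => hf.differentiable one_ne_zero x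
  obtain ⟨C, hC⟩ : ∃ C, ∀ x ∈ Set.Icc (0:ℝ) 1, ‖deriv f x‖ ≤ C :=
    (isCompact_Icc.exists_bound_of_continuousOn hfd.continuousOn)
  have hC0 : 0 ≤ C := le_trans (norm_nonneg _) (hC 0 ⟨le_rfl, zero_le_one⟩)
  have hfb : ∀ z ∈ Set.Icc (0:ℝ) 1, |f z| ≤ C * z ∧ |f z| ≤ C * (1 - z) := by
    intro z hz
    constructor
    · have := Convex.norm_image_sub_le_of_norm_deriv_le (f := f) (s := Set.Icc (0:ℝ) 1)
        (fun x _ => hdiff x) hC (convex_Icc 0 1) ⟨le_rfl, zero_le_one⟩ hz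
      simpa [h0, abs_of_nonneg hz.1] using this
    · have := Convex.norm_image_sub_le_of_norm_deriv_le (f := f) (s := Set.Icc (0:ℝ) 1)
        (fun x _ => hdiff x) hC (convex_Icc 0 1) ⟨zero_le_one, le_rfl⟩ hz
      simp only [h1, Real.norm_eq_abs, sub_zero] at this
      calc |f z| ≤ C * |z - 1| := this
      _ = C * (1 - z) := by rw [abs_sub_comm, abs_of_nonneg (by linarith [hz.2])]
  set G : ℝ → ℝ := fun z => π * (Real.cos (π * z) / Real.sin (π * z)) * (f z) ^ 2 with hGdef
  set D : ℝ → ℝ := fun z => π * (((-Real.sin (π * z) * π) * Real.sin (π * z)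
      - Real.cos (π * z) * (Real.cos (π * z) * π)) / (Real.sin (π * z)) ^ 2 * (f z) ^ 2
      + (Real.cos (π * z) / Real.sin (π * z)) * (2 * f z * deriv f z)) with hDdef
  have hsin : ∀ z ∈ Set.Ioo (0:ℝ) 1, 0 < Real.sin (π * z) := by
    intro z hz
    apply Real.sin_pos_of_pos_of_lt_pi
    · exact mul_pos Real.pi_pos hz.1
    · nlinarith [Real.pi_pos, hz.2]
  have keyD : ∀ z ∈ Set.Ioo (0:ℝ) 1, HasDerivAt G (D z) z := by
    intro z hz
    have hs := hsin z hz
    have hsz : HasDerivAt (fun w => Real.sin (π * w)) (Real.cos (π * z) * π) z := by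
      simpa [Function.comp_def] using (Real.hasDerivAt_sin (π * z)).comp z ((hasDerivAt_id z).const_mul π)
    have hcz : HasDerivAt (fun w => Real.cos (π * w)) (-Real.sin (π * z) * π) z := by
      simpa [Function.comp_def] using (Real.hasDerivAt_cos (π * z)).comp z ((hasDerivAt_id z).const_mul π)
    have hq : HasDerivAt (fun w => Real.cos (π * w) / Real.sin (π * w))
        (((-Real.sin (π * z) * π) * Real.sin (π * z)
          - Real.cos (π * z) * (Real.cos (π * z) * π)) / (Real.sin (π * z)) ^ 2) z :=
      hcz.div hsz hs.ne'
    have hf2 : HasDerivAt (fun w => (f w) ^ 2) (2 * f z * deriv f z) z := by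
      simpa [mul_comm, mul_assoc, Pi.pow_def] using ((hdiff z).hasDerivAt).pow 2
    have := (hq.mul hf2).const_mul π
    simpa only [hGdef, hDdef, mul_assoc, Pi.mul_apply] using this
  have keyIneq : ∀ z ∈ Set.Ioo (0:ℝ) 1, D z ≤ (deriv f z) ^ 2 - π ^ 2 * (f z) ^ 2 := by
    intro z hz
    have hs := hsin z hz
    have hsc : Real.sin (π * z) ^ 2 + Real.cos (π * z) ^ 2 = 1 := Real.sin_sq_add_cos_sq _
    set u := Real.cos (π * z) / Real.sin (π * z) with hu
    have hnum : (-Real.sin (π * z) * π) * Real.sin (π * z)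
        - Real.cos (π * z) * (Real.cos (π * z) * π) = -π := by linear_combination (-π) * hsc
    have hw : (-π) / Real.sin (π * z) ^ 2 = -(π * (u ^ 2 + 1)) := by
      rw [hu]; field_simp; linarith [hsc]
    have hD : D z = -(π ^ 2 * (u ^ 2 + 1)) * (f z) ^ 2 + 2 * π * u * f z * deriv f z := by
      simp only [hDdef]
      rw [hnum, hw]
      ring
    rw [hD]
    nlinarith [sq_nonneg (deriv f z - π * u * f z)]
  have hc1 : Continuous fun z : ℝ => Real.sin (π * z) :=
    Real.continuous_sin.comp (continuous_const.mul continuous_id)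
  have hc2 : Continuous fun z : ℝ => Real.cos (π * z) :=
    Real.continuous_cos.comp (continuous_const.mul continuous_id)
  have hEcont : Continuous fun z => (deriv f z) ^ 2 - π ^ 2 * (f z) ^ 2 :=
    (hfd.pow 2).sub (continuous_const.mul (hfc.pow 2))
  have hInt : ∀ ε : ℝ, 0 < ε → ε < 1/2 →
      G (1 - ε) - G ε ≤ ∫ z in Set.Ioo ε (1 - ε), ((deriv f z) ^ 2 - π ^ 2 * (f z) ^ 2) := by
    intro ε hε hε2
    have hle : ε ≤ 1 - ε := by linarith
    have hsub : Set.uIcc ε (1 - ε) ⊆ Set.Ioo (0:ℝ) 1 := by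
      rw [Set.uIcc_of_le hle]
      intro x hx
      exact ⟨lt_of_lt_of_le hε hx.1, lt_of_le_of_lt hx.2 (by linarith)⟩
    have hDcont : ContinuousOn D (Set.uIcc ε (1 - ε)) := by
      apply ContinuousOn.mul continuousOn_const
      apply ContinuousOn.add
      · exact ((((hc1.neg.mul continuous_const).mul hc1).sub
          (hc2.mul (hc2.mul continuous_const))).continuousOn.div
          ((hc1.pow 2).continuousOn)
          (fun x hx => pow_ne_zero 2 (hsin x (hsub hx)).ne')).mul ((hfc.pow 2).continuousOn)
      · exact (hc2.continuousOn.div hc1.continuousOn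
          (fun x hx => (hsin x (hsub hx)).ne')).mul
          ((continuous_const.mul hfc).mul hfd).continuousOn
    have hftc : ∫ z in ε..(1-ε), D z = G (1 - ε) - G ε :=
      intervalIntegral.integral_eq_sub_of_hasDerivAt (fun x hx => keyD x (hsub hx))
        (hDcont.intervalIntegrable)
    have hmono : ∫ z in ε..(1-ε), D z ≤
        ∫ z in ε..(1-ε), ((deriv f z) ^ 2 - π ^ 2 * (f z) ^ 2) := by
      apply intervalIntegral.integral_mono_on hle hDcont.intervalIntegrable
        (hEcont.intervalIntegrable ε (1-ε))
      intro x hx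
      exact keyIneq x (hsub ((Set.uIcc_of_le hle).symm ▸ hx))
    rw [hftc] at hmono
    calc G (1 - ε) - G ε ≤ ∫ z in ε..(1-ε), ((deriv f z) ^ 2 - π ^ 2 * (f z) ^ 2) := hmono
    _ = ∫ z in Set.Ioo ε (1-ε), ((deriv f z) ^ 2 - π ^ 2 * (f z) ^ 2) := by
        rw [intervalIntegral.integral_of_le hle, MeasureTheory.integral_Ioc_eq_integral_Ioo]
  -- bounds on G near the endpoints
  have hGb : ∀ ε : ℝ, 0 < ε → ε < 1/2 → -(2 * C ^ 2 * ε) ≤ G (1 - ε) - G ε := by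
    intro ε hε hε2
    have hπε : 0 < π * ε := mul_pos Real.pi_pos hε
    have hπε2 : π * ε < π / 2 := by nlinarith [Real.pi_pos]
    have hcos : 0 < Real.cos (π * ε) := Real.cos_pos_of_mem_Ioo ⟨by linarith [Real.pi_pos], hπε2⟩
    have hsinε : 0 < Real.sin (π * ε) := Real.sin_pos_of_pos_of_lt_pi hπε (by linarith [Real.pi_pos])
    have htan : π * ε < Real.tan (π * ε) := Real.lt_tan hπε hπε2
    have hcot : Real.cos (π * ε) / Real.sin (π * ε) ≤ 1 / (π * ε) := by
      rw [div_le_div_iff₀ hsinε hπε]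
      have : Real.tan (π * ε) = Real.sin (π * ε) / Real.cos (π * ε) := Real.tan_eq_sin_div_cos _
      rw [this] at htan
      rw [lt_div_iff₀ hcos] at htan
      linarith
    have hcotpos : 0 ≤ Real.cos (π * ε) / Real.sin (π * ε) := le_of_lt (div_pos hcos hsinε)
    have hfε : (f ε) ^ 2 ≤ C ^ 2 * ε ^ 2 := by
      have h := (hfb ε ⟨hε.le, by linarith⟩).1
      nlinarith [abs_nonneg (f ε), sq_abs (f ε)]
    have hfε' : (f (1 - ε)) ^ 2 ≤ C ^ 2 * ε ^ 2 := by
      have h := (hfb (1 - ε) ⟨by linarith, by linarith⟩).2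
      nlinarith [abs_nonneg (f (1 - ε)), sq_abs (f (1 - ε))]
    have hGεub : G ε ≤ C ^ 2 * ε := by
      have : G ε ≤ π * (1 / (π * ε)) * (C ^ 2 * ε ^ 2) := by
        simp only [hGdef]
        apply mul_le_mul
        · exact mul_le_mul_of_nonneg_left hcot Real.pi_pos.le
        · exact hfε
        · exact sq_nonneg _
        · positivity
      calc G ε ≤ π * (1 / (π * ε)) * (C ^ 2 * ε ^ 2) := this
      _ = C ^ 2 * ε := by field_simp
    have hG1lb : -(C ^ 2 * ε) ≤ G (1 - ε) := by
      have hrw : G (1 - ε) = π * (-(Real.cos (π * ε)) / Real.sin (π * ε)) * (f (1 - ε)) ^ 2 := by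
        simp only [hGdef]
        have h1 : π * (1 - ε) = π - π * ε := by ring
        rw [h1, Real.cos_pi_sub, Real.sin_pi_sub]
      rw [hrw]
      have hkey : π * (Real.cos (π * ε) / Real.sin (π * ε)) * (f (1 - ε)) ^ 2 ≤ C ^ 2 * ε := by
        have : π * (Real.cos (π * ε) / Real.sin (π * ε)) * (f (1 - ε)) ^ 2
            ≤ π * (1 / (π * ε)) * (C ^ 2 * ε ^ 2) := by
          apply mul_le_mul
          · exact mul_le_mul_of_nonneg_left hcot Real.pi_pos.le
          · exact hfε'
          · exact sq_nonneg _
          · positivity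
        calc π * (Real.cos (π * ε) / Real.sin (π * ε)) * (f (1 - ε)) ^ 2
            ≤ π * (1 / (π * ε)) * (C ^ 2 * ε ^ 2) := this
        _ = C ^ 2 * ε := by field_simp
      have : π * (-(Real.cos (π * ε)) / Real.sin (π * ε)) * (f (1 - ε)) ^ 2
          = -(π * (Real.cos (π * ε) / Real.sin (π * ε)) * (f (1 - ε)) ^ 2) := by ring
      rw [this]
      linarith
    linarith
  -- take the limit along εₙ = 1/(n+3)
  set s : ℕ → Set ℝ := fun n => Set.Ioo (1/(n+3) : ℝ) (1 - 1/(n+3)) with hsdef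
  have hεpos : ∀ n : ℕ, 0 < (1/(n+3) : ℝ) := by intro n; positivity
  have hεhalf : ∀ n : ℕ, (1/(n+3) : ℝ) < 1/2 := by
    intro n
    rw [div_lt_div_iff₀ (by positivity) (by norm_num)]
    have : (0:ℝ) ≤ n := Nat.cast_nonneg n
    linarith
  have hmonos : Monotone s := by
    intro m n hmn
    apply Set.Ioo_subset_Ioo
    · apply one_div_le_one_div_of_le (by positivity)
      have : (m:ℝ) ≤ n := Nat.cast_le.mpr hmn
      linarith
    · have : (1/(n+3) : ℝ) ≤ 1/(m+3) := by
        apply one_div_le_one_div_of_le (by positivity)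
        have : (m:ℝ) ≤ n := Nat.cast_le.mpr hmn
        linarith
      linarith
  have hunion : (⋃ n, s n) = Set.Ioo (0:ℝ) 1 := by
    ext z
    simp only [Set.mem_iUnion, hsdef, Set.mem_Ioo]
    constructor
    · rintro ⟨n, hn1, hn2⟩
      exact ⟨lt_trans (hεpos n) hn1, by linarith [hεpos n]⟩
    · rintro ⟨hz1, hz2⟩
      obtain ⟨n, hn⟩ := exists_nat_one_div_lt (lt_min hz1 (by linarith : (0:ℝ) < 1 - z))
      refine ⟨n, ?_, ?_⟩
      · have h1 : (1/(n+3) : ℝ) ≤ 1/(n+1) := by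
          apply one_div_le_one_div_of_le (by positivity); push_cast; linarith
        calc (1/(n+3) : ℝ) ≤ 1/(n+1) := h1
        _ < min z (1 - z) := hn
        _ ≤ z := min_le_left _ _
      · have h1 : (1/(n+3) : ℝ) ≤ 1/(n+1) := by
          apply one_div_le_one_div_of_le (by positivity); push_cast; linarith
        have h2 : (1/(n+1) : ℝ) < 1 - z := lt_of_lt_of_le hn (min_le_right _ _)
        linarith
  have hIntOn : IntegrableOn (fun z => (deriv f z) ^ 2 - π ^ 2 * (f z) ^ 2)
      (Set.Ioo (0:ℝ) 1) volume := by
    apply (hEcont.continuousOn.integrableOn_compact isCompact_Icc).mono_set Set.Ioo_subset_Icc_self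
  have hlim1 : Filter.Tendsto (fun n : ℕ => ∫ z in s n, ((deriv f z) ^ 2 - π ^ 2 * (f z) ^ 2))
      Filter.atTop (nhds (∫ z in Set.Ioo (0:ℝ) 1, ((deriv f z) ^ 2 - π ^ 2 * (f z) ^ 2))) := by
    have := MeasureTheory.tendsto_setIntegral_of_monotone (fun n => measurableSet_Ioo)
      hmonos (hunion ▸ hIntOn)
    rwa [hunion] at this
  have hlim2 : Filter.Tendsto (fun n : ℕ => -(2 * C ^ 2 * (1/(n+3) : ℝ)))
      Filter.atTop (nhds 0) := by
    have h0 : Filter.Tendsto (fun n : ℕ => ((n:ℝ) + 3)) Filter.atTop Filter.atTop :=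
      Filter.tendsto_atTop_add_const_right _ 3 tendsto_natCast_atTop_atTop
    have h := h0.inv_tendsto_atTop
    have := (h.const_mul (2 * C ^ 2)).neg
    simpa [one_div] using this
  have hle : ∀ n : ℕ, -(2 * C ^ 2 * (1/(n+3) : ℝ)) ≤
      ∫ z in s n, ((deriv f z) ^ 2 - π ^ 2 * (f z) ^ 2) := by
    intro n
    calc -(2 * C ^ 2 * (1/(n+3) : ℝ)) ≤ G (1 - 1/(n+3)) - G (1/(n+3)) :=
      hGb _ (hεpos n) (hεhalf n)
    _ ≤ ∫ z in s n, ((deriv f z) ^ 2 - π ^ 2 * (f z) ^ 2) := hInt _ (hεpos n) (hεhalf n)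
  have := le_of_tendsto_of_tendsto' hlim2 hlim1 hle
  simpa using this

noncomputable def T : ℝ × ℝ × ℝ → (Fin 3 → ℝ) := fun q => ![q.1, q.2.1, q.2.2]

lemma T_eq : T = (MeasurableEquiv.piFinSuccAbove (fun _ : Fin 3 => ℝ) 0).symm ∘
    (Prod.map id (MeasurableEquiv.finTwoArrow (α := ℝ)).symm) := by
  funext q
  simp only [T, Function.comp_apply, Prod.map_apply, id_eq, MeasurableEquiv.finTwoArrow,
    MeasurableEquiv.piFinSuccAbove, MeasurableEquiv.symm_mk, MeasurableEquiv.coe_mk,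
    Equiv.symm_symm, Fin.consEquiv_apply, Matrix.vecCons]
  have h0 : (![] : Fin 0 → ℝ) = finZeroElim := funext fun i => i.elim0
  rw [h0]
  simp [MeasurableEquiv.piFinTwo, Fin.insertNthEquiv, Fin.insertNth_zero, Fin.consEquiv,
    MeasurableEquiv.funUnique]

lemma T_mp : MeasurePreserving T volume volume := by
  rw [T_eq]
  exact ((MeasureTheory.volume_preserving_piFinSuccAbove (fun _ : Fin 3 => ℝ) 0).symm).comp
    ((MeasurePreserving.id volume).prod (MeasureTheory.volume_preserving_finTwoArrow ℝ).symm)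

lemma T_emb : MeasurableEmbedding T := by
  rw [T_eq]
  exact ((MeasurableEquiv.piFinSuccAbove (fun _ : Fin 3 => ℝ) 0).symm.measurableEmbedding).comp
    (MeasurableEmbedding.id.prodMap (MeasurableEquiv.finTwoArrow (α := ℝ)).symm.measurableEmbedding)

lemma slice_eq (a b : ℝ) :
    (fun w : ℝ => ![a, b, w]) = fun w => ![a, b, (0:ℝ)] + w • Pi.single (2 : Fin 3) (1 : ℝ) := by
  funext w
  funext j
  fin_cases j <;> simp [Pi.single_apply]

lemma slice_contDiff (a b : ℝ) : ContDiff ℝ 1 (fun w : ℝ => ![a, b, w]) := by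
  rw [slice_eq]
  exact contDiff_const.add (contDiff_id.smul contDiff_const)

lemma slice_hasDerivAt (v : (Fin 3 → ℝ) → (Fin 3 → ℝ)) (hv : ContDiff ℝ 1 v) (a b : ℝ)
    (i : Fin 3) (z : ℝ) :
    HasDerivAt (fun w => v ![a, b, w] i) (pder v ![a, b, z] i 2) z := by
  have hE : HasDerivAt (fun w : ℝ => ![a, b, w]) (Pi.single (2 : Fin 3) (1 : ℝ)) z := by
    rw [slice_eq]
    simpa using ((hasDerivAt_id z).smul_const (Pi.single (2 : Fin 3) (1 : ℝ))).const_add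
      ![a, b, (0:ℝ)]
  have h2 : HasDerivAt (fun w : ℝ => v ![a, b, w])
      (fderiv ℝ v ![a, b, z] (Pi.single (2 : Fin 3) (1 : ℝ))) z :=
    (hv.differentiable one_ne_zero ![a, b, z]).hasFDerivAt.comp_hasDerivAt z hE
  have h3 := ((ContinuousLinearMap.proj (R := ℝ) (φ := fun _ : Fin 3 => ℝ) i).hasFDerivAt
    ).comp_hasDerivAt z h2
  simpa [pder, ContinuousLinearMap.proj_apply, Function.comp_def] using h3

lemma slice_contDiff_comp (v : (Fin 3 → ℝ) → (Fin 3 → ℝ)) (hv : ContDiff ℝ 1 v) (a b : ℝ)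
    (i : Fin 3) : ContDiff ℝ 1 (fun w : ℝ => v ![a, b, w] i) :=
  (ContinuousLinearMap.proj (R := ℝ) (φ := fun _ : Fin 3 => ℝ) i).contDiff.comp
    (hv.comp (slice_contDiff a b))

lemma pder_continuous (v : (Fin 3 → ℝ) → (Fin 3 → ℝ)) (hv : ContDiff ℝ 1 v) (i j : Fin 3) :
    Continuous fun x => pder v x i j :=
  (continuous_apply i).comp ((hv.continuous_fderiv one_ne_zero).clm_apply continuous_const)

lemma T_continuous : Continuous T := by
  apply continuous_pi
  intro i
  fin_cases i
  · simpa [T] using continuous_fst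
  · simpa [T] using (continuous_snd.fst)
  · simpa [T] using (continuous_snd.snd)

end Aux

theorem second_variation_form_coercive (L₁ L₂ t : ℝ) (hL₁ : 0 < L₁) (hL₂ : 0 < L₂)
    (ht : 0 ≤ t) (ht' : t ≤ 0.766) :
    let Ω : Set (Fin 3 → ℝ) := {p : Fin 3 → ℝ |
      p 0 ∈ Set.Ioo (-L₁) L₁ ∧ p 1 ∈ Set.Ioo (-L₂) L₂ ∧ p 2 ∈ Set.Ioo (0 : ℝ) 1}
    let H : ((Fin 3 → ℝ) → (Fin 3 → ℝ)) → ℝ := fun v =>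
      ∫ x in Ω, ((∑ i : Fin 3, ∑ j : Fin 3, (pder v x i j) ^ 2)
        + 2 * t * (∑ i : Fin 3, v x i * curl v x i)
        - (π ^ 2 / 4 + t ^ 2) * ∑ i : Fin 3, (v x i) ^ 2)
    ∃ γ : ℝ, 0 < γ ∧
      γ = π ^ 2 * (1 - 1 / (2 * Real.sqrt 2)) - π ^ 2 / 4 - (1 + 4 * Real.sqrt 2) * t ^ 2 ∧
      ∀ v : (Fin 3 → ℝ) → (Fin 3 → ℝ), ContDiff ℝ 1 v →
        (∀ x ∈ Set.Icc (-L₁) L₁, ∀ y ∈ Set.Icc (-L₂) L₂, v ![x, y, 0] = 0) →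
        (∀ x ∈ Set.Icc (-L₁) L₁, ∀ y ∈ Set.Icc (-L₂) L₂, v ![x, y, 1] = 0) →
        (∀ y ∈ Set.Icc (-L₂) L₂, ∀ z ∈ Set.Icc (0 : ℝ) 1, v ![-L₁, y, z] = v ![L₁, y, z]) →
        (∀ x ∈ Set.Icc (-L₁) L₁, ∀ z ∈ Set.Icc (0 : ℝ) 1, v ![x, -L₂, z] = v ![x, L₂, z]) →
        H v ≥ γ * ∫ x in Ω, (∑ i : Fin 3, (v x i) ^ 2) := by
  intro Ω H
  set s : ℝ := Real.sqrt 2 with hsdef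
  have hs : 0 < s := Real.sqrt_pos.mpr two_pos
  have hs2 : s ^ 2 = 2 := Real.sq_sqrt two_pos.le
  have hsu : s < 1.4142136 := by nlinarith
  have hsl : 1.414213 < s := by nlinarith
  have h2s : (1:ℝ) / (2 * s) = s / 4 := by
    rw [div_eq_div_iff (by positivity) (by norm_num)]
    nlinarith
  set γ : ℝ := π ^ 2 * (1 - 1 / (2 * s)) - π ^ 2 / 4 - (1 + 4 * s) * t ^ 2 with hγdef
  have hπ : 3.141592 < π := Real.pi_gt_d6
  have hπ2 : 9.8696 < π ^ 2 := by nlinarith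
  have hγpos : 0 < γ := by
    rw [hγdef, h2s]
    have ht2 : t ^ 2 ≤ 0.586756 := by nlinarith
    nlinarith [mul_pos (by nlinarith : (0:ℝ) < π ^ 2 - 9.8696)
      (by nlinarith : (0:ℝ) < 1.4142136 - s)]
  refine ⟨γ, hγpos, rfl, ?_⟩
  intro v hv hbot htop _ _
  -- notation
  set P : (Fin 3 → ℝ) → ℝ := fun x => ∑ i : Fin 3, (pder v x i 2) ^ 2 with hPdef
  set Q : (Fin 3 → ℝ) → ℝ := fun x => ∑ i : Fin 3, (v x i) ^ 2 with hQdef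
  set c₁ : ℝ := 1 - s / 4 with hc1def
  set c₂ : ℝ := π ^ 2 / 4 + (1 + 4 * s) * t ^ 2 with hc2def
  have hc1pos : 0 < c₁ := by rw [hc1def]; nlinarith
  -- continuity facts
  have hvC : ∀ i : Fin 3, Continuous fun x => v x i :=
    fun i => (continuous_apply i).comp hv.continuous
  have hPcont : Continuous P := by
    apply continuous_finset_sum
    intro i _
    exact (pder_continuous v hv i 2).pow 2
  have hQcont : Continuous Q := by
    apply continuous_finset_sum
    intro i _
    exact (hvC i).pow 2
  have hcurlC : ∀ i : Fin 3, Continuous fun x => curl v x i := by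
    intro i
    fin_cases i
    · exact
        ((pder_continuous v hv 2 1).sub (pder_continuous v hv 1 2))
    · exact
        ((pder_continuous v hv 0 2).sub (pder_continuous v hv 2 0))
    · exact
        ((pder_continuous v hv 1 0).sub (pder_continuous v hv 0 1))
  have hEcont : Continuous fun x =>
      ((∑ i : Fin 3, ∑ j : Fin 3, (pder v x i j) ^ 2)
        + 2 * t * (∑ i : Fin 3, v x i * curl v x i)
        - (π ^ 2 / 4 + t ^ 2) * ∑ i : Fin 3, (v x i) ^ 2) := by
    apply Continuous.sub
    · apply Continuous.add
      · exact continuous_finset_sum _ fun i _ =>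
          continuous_finset_sum _ fun j _ => (pder_continuous v hv i j).pow 2
      · apply Continuous.mul continuous_const
        apply continuous_finset_sum
        intro i _
        exact (hvC i).mul (hcurlC i)
    · exact continuous_const.mul hQcont
  -- measurability and integrability on Ω
  have hΩmeas : MeasurableSet Ω := by
    have : Ω = (fun p : Fin 3 → ℝ => p 0) ⁻¹' (Set.Ioo (-L₁) L₁) ∩
        ((fun p : Fin 3 → ℝ => p 1) ⁻¹' (Set.Ioo (-L₂) L₂) ∩
         (fun p : Fin 3 → ℝ => p 2) ⁻¹' (Set.Ioo (0:ℝ) 1)) := rfl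
    rw [this]
    exact ((measurable_pi_apply 0) measurableSet_Ioo).inter
      (((measurable_pi_apply 1) measurableSet_Ioo).inter
        ((measurable_pi_apply 2) measurableSet_Ioo))
  have hΩK : Ω ⊆ Set.pi Set.univ
      (![Set.Icc (-L₁) L₁, Set.Icc (-L₂) L₂, Set.Icc (0:ℝ) 1]) := by
    intro p hp
    intro j _
    fin_cases j
    · exact ⟨hp.1.1.le, hp.1.2.le⟩
    · exact ⟨hp.2.1.1.le, hp.2.1.2.le⟩
    · exact ⟨hp.2.2.1.le, hp.2.2.2.le⟩
  have hKcomp : IsCompact (Set.pi Set.univ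
      (![Set.Icc (-L₁) L₁, Set.Icc (-L₂) L₂, Set.Icc (0:ℝ) 1])) := by
    apply isCompact_univ_pi
    intro i
    fin_cases i <;> simp <;> exact isCompact_Icc
  have hIntOn : ∀ g : (Fin 3 → ℝ) → ℝ, Continuous g → IntegrableOn g Ω volume := fun g hg =>
    ((hg.continuousOn.integrableOn_compact hKcomp).mono_set hΩK)
  -- pointwise bound
  have hpoint : ∀ x, c₁ * P x - c₂ * Q x ≤
      ((∑ i : Fin 3, ∑ j : Fin 3, (pder v x i j) ^ 2)
        + 2 * t * (∑ i : Fin 3, v x i * curl v x i)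
        - (π ^ 2 / 4 + t ^ 2) * ∑ i : Fin 3, (v x i) ^ 2) := by
    intro x
    simp only [hPdef, hQdef, hc1def, hc2def, curl, Fin.sum_univ_three,
      Matrix.cons_val_zero, Matrix.cons_val_one, Matrix.head_cons, Matrix.cons_val_two,
      Matrix.tail_cons]
    have h14 : (0:ℝ) ≤ 1 - s / 4 := by nlinarith
    have c1 := cauchy_pair s t (v x 0) (pder v x 2 1) hs hs2
    have c2 := cauchy_pair s t (v x 0) (-(pder v x 1 2)) hs hs2
    have c3 := cauchy_pair s t (v x 1) (pder v x 0 2) hs hs2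
    have c4 := cauchy_pair s t (v x 1) (-(pder v x 2 0)) hs hs2
    have c5 := cauchy_pair s t (v x 2) (pder v x 1 0) hs hs2
    have c6 := cauchy_pair s t (v x 2) (-(pder v x 0 1)) hs hs2
    linarith [c1, c2, c3, c4, c5, c6, sq_nonneg (pder v x 0 0), sq_nonneg (pder v x 1 1),
      mul_nonneg (by positivity : (0:ℝ) ≤ s / 4) (sq_nonneg (pder v x 2 2)),
      mul_nonneg h14 (sq_nonneg (pder v x 0 1)), mul_nonneg h14 (sq_nonneg (pder v x 1 0)),
      mul_nonneg h14 (sq_nonneg (pder v x 2 0)), mul_nonneg h14 (sq_nonneg (pder v x 2 1))]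
  -- the Poincaré step: 0 ≤ ∫_Ω (P - π² Q)
  have hpoincare : 0 ≤ ∫ x in Ω, (P x - π ^ 2 * Q x) := by
    have hgc : Continuous fun x => P x - π ^ 2 * Q x :=
      hPcont.sub (continuous_const.mul hQcont)
    have hpre : T ⁻¹' Ω = (Set.Ioo (-L₁) L₁) ×ˢ ((Set.Ioo (-L₂) L₂) ×ˢ (Set.Ioo (0:ℝ) 1)) := by
      ext ⟨a, b, c⟩
      simp [T, Ω, Set.mem_setOf_eq]
    rw [← T_mp.setIntegral_preimage_emb T_emb (fun x => P x - π ^ 2 * Q x) Ω, hpre]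
    have hint3 : IntegrableOn (fun q => P (T q) - π ^ 2 * Q (T q))
        ((Set.Ioo (-L₁) L₁) ×ˢ ((Set.Ioo (-L₂) L₂) ×ˢ (Set.Ioo (0:ℝ) 1))) volume := by
      apply IntegrableOn.mono_set
        (((hgc.comp T_continuous).continuousOn.integrableOn_compact
          ((isCompact_Icc (a := -L₁) (b := L₁)).prod
            ((isCompact_Icc (a := -L₂) (b := L₂)).prod (isCompact_Icc (a := (0:ℝ)) (b := 1))))))
      exact Set.prod_mono Set.Ioo_subset_Icc_self
        (Set.prod_mono Set.Ioo_subset_Icc_self Set.Ioo_subset_Icc_self)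
    rw [MeasureTheory.Measure.volume_eq_prod ℝ (ℝ × ℝ)] at hint3 ⊢
    rw [MeasureTheory.setIntegral_prod _ hint3]
    apply MeasureTheory.setIntegral_nonneg measurableSet_Ioo
    intro a ha
    have hint2 : IntegrableOn (fun q : ℝ × ℝ => P (T (a, q)) - π ^ 2 * Q (T (a, q)))
        ((Set.Ioo (-L₂) L₂) ×ˢ (Set.Ioo (0:ℝ) 1)) volume := by
      have hTa : Continuous fun q : ℝ × ℝ => T (a, q) :=
        T_continuous.comp (continuous_const.prodMk continuous_id)
      apply IntegrableOn.mono_set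
        (((hgc.comp hTa).continuousOn.integrableOn_compact
          ((isCompact_Icc (a := -L₂) (b := L₂)).prod (isCompact_Icc (a := (0:ℝ)) (b := 1)))))
      exact Set.prod_mono Set.Ioo_subset_Icc_self Set.Ioo_subset_Icc_self
    rw [MeasureTheory.Measure.volume_eq_prod ℝ ℝ] at hint2 ⊢
    rw [MeasureTheory.setIntegral_prod _ hint2]
    apply MeasureTheory.setIntegral_nonneg measurableSet_Ioo
    intro b hb
    -- the innermost z-integral: Wirtinger for each component
    have hTab : ∀ c : ℝ, T (a, b, c) = ![a, b, c] := fun c => rfl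
    simp only [hTab]
    have hsplit : ∀ c : ℝ, P ![a, b, c] - π ^ 2 * Q ![a, b, c] =
        ∑ i : Fin 3, ((pder v ![a, b, c] i 2) ^ 2 - π ^ 2 * (v ![a, b, c] i) ^ 2) := by
      intro c
      rw [hPdef, hQdef, Finset.mul_sum, ← Finset.sum_sub_distrib]
    simp only [hsplit]
    rw [MeasureTheory.integral_finset_sum]
    · apply Finset.sum_nonneg
      intro i _
      have hfC : ContDiff ℝ 1 (fun w : ℝ => v ![a, b, w] i) := slice_contDiff_comp v hv a b i
      have hf0 : v ![a, b, (0:ℝ)] i = 0 := by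
        have := hbot a (Set.mem_Icc_of_Ioo ha) b (Set.mem_Icc_of_Ioo hb)
        rw [this]; rfl
      have hf1 : v ![a, b, (1:ℝ)] i = 0 := by
        have := htop a (Set.mem_Icc_of_Ioo ha) b (Set.mem_Icc_of_Ioo hb)
        rw [this]; rfl
      have hw := wirtinger (fun w : ℝ => v ![a, b, w] i) hfC hf0 hf1
      have hder : ∀ c : ℝ, deriv (fun w : ℝ => v ![a, b, w] i) c = pder v ![a, b, c] i 2 :=
        fun c => (slice_hasDerivAt v hv a b i c).deriv
      calc (0:ℝ) ≤ ∫ z in Set.Ioo (0:ℝ) 1,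
          ((deriv (fun w : ℝ => v ![a, b, w] i) z) ^ 2
            - π ^ 2 * ((fun w : ℝ => v ![a, b, w] i) z) ^ 2) := hw
      _ = ∫ z in Set.Ioo (0:ℝ) 1,
          ((pder v ![a, b, z] i 2) ^ 2 - π ^ 2 * (v ![a, b, z] i) ^ 2) := by
            apply MeasureTheory.integral_congr_ae
            filter_upwards with z
            rw [hder z]
    · intro i _
      have hcont : Continuous fun c : ℝ =>
          (pder v ![a, b, c] i 2) ^ 2 - π ^ 2 * (v ![a, b, c] i) ^ 2 := by
        have hec : Continuous fun c : ℝ => (![a, b, c] : Fin 3 → ℝ) :=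
          (slice_contDiff a b).continuous
        exact (((pder_continuous v hv i 2).comp hec).pow 2).sub
          (continuous_const.mul (((hvC i).comp hec).pow 2))
      exact (hcont.continuousOn.integrableOn_compact isCompact_Icc).mono_set
        Set.Ioo_subset_Icc_self
  -- assemble
  have hIntE := hIntOn _ hEcont
  have hIntP := hIntOn _ hPcont
  have hIntQ := hIntOn _ hQcont
  have h1 : ∫ x in Ω, (c₁ * P x - c₂ * Q x) ≤ H v := by
    apply MeasureTheory.setIntegral_mono_on
    · exact (hIntP.const_mul c₁).sub (hIntQ.const_mul c₂)
    · exact hIntE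
    · exact hΩmeas
    · intro x _
      exact hpoint x
  have h2 : ∫ x in Ω, (c₁ * P x - c₂ * Q x)
      = c₁ * (∫ x in Ω, P x) - c₂ * (∫ x in Ω, Q x) := by
    rw [MeasureTheory.integral_sub (hIntP.const_mul c₁) (hIntQ.const_mul c₂),
      MeasureTheory.integral_const_mul, MeasureTheory.integral_const_mul]
  have h3 : π ^ 2 * (∫ x in Ω, Q x) ≤ ∫ x in Ω, P x := by
    have := hpoincare
    rw [MeasureTheory.integral_sub hIntP (hIntQ.const_mul (π ^ 2)),
      MeasureTheory.integral_const_mul] at this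
    linarith
  have hγeq : γ = c₁ * π ^ 2 - c₂ := by rw [hγdef, hc1def, hc2def, h2s]; ring
  have hQnonneg : 0 ≤ ∫ x in Ω, Q x := by
    apply MeasureTheory.setIntegral_nonneg hΩmeas
    intro x _
    rw [hQdef]
    positivity
  calc H v ≥ ∫ x in Ω, (c₁ * P x - c₂ * Q x) := h1
  _ = c₁ * (∫ x in Ω, P x) - c₂ * (∫ x in Ω, Q x) := h2
  _ ≥ c₁ * (π ^ 2 * (∫ x in Ω, Q x)) - c₂ * (∫ x in Ω, Q x) := by
      nlinarith [mul_le_mul_of_nonneg_left h3 hc1pos.le]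
  _ = γ * ∫ x in Ω, Q x := by rw [hγeq]; ring
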